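/- Let ((V,E), S, c, d) be a network with positive integer edge costs and let M be a positive integer. Suppose h_{d,M} attains its minimum over 𝔾^n. Then there exists an optimal potential (x,y) ∈ 𝔾^n such that dist(0, x_i) ≤ M and y_i ≤ 2M for every i ∈ V∖S. -/

import Mathlib

open Finset

/-- Representatives of points of the infinite `k`-star: a nonnegative radius and a
branch index. -/
def StarRep (k : ℕ) : Type := {r : ℝ // 0 ≤ r} × Fin k

/-- Two representatives are identified iff they are equal or both have radius `0`. -/
def starRel (k : ℕ) (p q : StarRep k) : Prop := p = q ∨ (p.1.1 = 0 ∧ q.1.1 = 0)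

/-- The setoid identifying all points of radius `0` (the origin). -/
def starSetoid (k : ℕ) : Setoid (StarRep k) where
  r := starRel k
  iseqv := by
    constructor
    · intro p; left; rfl
    · rintro p q (rfl | ⟨h1, h2⟩)
      · left; rfl
      · right; exact ⟨h2, h1⟩
    · rintro p q r (rfl | ⟨h1, h2⟩) (rfl | ⟨h3, h4⟩)
      · left; rfl
      · right; exact ⟨h3, h4⟩
      · right; exact ⟨h1, h2⟩
      · right; exact ⟨h1, h4⟩

/-- The infinite `k`-star `𝕋`: `k` half-lines glued at a common origin. -/
def TStar (k : ℕ) : Type := Quotient (starSetoid k)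

/-- Distance on representatives. -/
noncomputable def starDistFun (k : ℕ) (p q : StarRep k) : ℝ :=
  if p.2 = q.2 then |p.1.1 - q.1.1| else p.1.1 + q.1.1

theorem starDistFun_zero_right (k : ℕ) (p q : StarRep k) (h : q.1.1 = 0) :
    starDistFun k p q = p.1.1 := by
  unfold starDistFun; rw [h]
  split <;> simp [abs_of_nonneg p.1.2]

theorem starDistFun_zero_left (k : ℕ) (p q : StarRep k) (h : p.1.1 = 0) :
    starDistFun k p q = q.1.1 := by
  unfold starDistFun; rw [h]
  split <;> simp [abs_of_nonneg q.1.2, abs_sub_comm]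

/-- The metric `dist` of the infinite `k`-star. -/
noncomputable def starDist (k : ℕ) : TStar k → TStar k → ℝ :=
  Quotient.lift₂ (starDistFun k) (by
    rintro p q p' q' (rfl | ⟨h1, h2⟩) (rfl | ⟨h3, h4⟩)
    · rfl
    · rw [starDistFun_zero_right k p q h3, starDistFun_zero_right k p q' h4]
    · rw [starDistFun_zero_left k p q h1, starDistFun_zero_left k p' q h2]
    · rw [starDistFun_zero_right k p q h3, starDistFun_zero_right k p' q' h4, h1, h2])

/-- The distance from the origin (the radius). -/
noncomputable def starRad (k : ℕ) : TStar k → ℝ :=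
  Quotient.lift (fun p : StarRep k => p.1.1) (by
    rintro p q (rfl | ⟨h1, h2⟩) <;> simp_all)

/-- The point at distance `r ≥ 0` on the `s`-th branch. -/
def starPt (k : ℕ) (r : ℝ) (hr : 0 ≤ r) (s : Fin k) : TStar k :=
  Quotient.mk (starSetoid k) (⟨r, hr⟩, s)

/-- A real is an integer. -/
def IsIntegralReal (r : ℝ) : Prop := ∃ z : ℤ, r = (z : ℝ)

/-- A real lies in `ℤ + 1/2`. -/
def IsHalfIntegralOdd (r : ℝ) : Prop := ∃ z : ℤ, r = (z : ℝ) + 1 / 2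

/-- The grid `𝔾 ⊆ 𝕋 × ℝ`: both coordinates integral, or both proper half-integral. -/
def StarGrid (k : ℕ) : Set (TStar k × ℝ) :=
  {p | (IsIntegralReal (starRad k p.1) ∧ IsIntegralReal p.2) ∨
    (IsHalfIntegralOdd (starRad k p.1) ∧ IsHalfIntegralOdd p.2)}

/-- A potential: a point of `𝔾^n` satisfying the dual constraints
`dist(x_i,x_j) − y_i − y_j ≤ 2d(ij)` on edges, the boundary condition
`(x_s, y_s) = ((M,s), 0)` on terminals (the terminals being the first `k` nodes),
and `y ≥ 0`. -/
def IsPotential (n k : ℕ) (G : SimpleGraph (Fin n)) (d : Sym2 (Fin n) → ℕ) (M : ℕ)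
    (p : Fin n → TStar k × ℝ) : Prop :=
  (∀ i, p i ∈ StarGrid k) ∧
  (∀ i j, G.Adj i j →
    starDist k (p i).1 (p j).1 - (p i).2 - (p j).2 ≤ 2 * (d s(i, j) : ℝ)) ∧
  (∀ i : Fin n, ∀ h : i.val < k,
    p i = (starPt k (M : ℝ) (Nat.cast_nonneg M) ⟨i.val, h⟩, 0)) ∧
  (∀ i, 0 ≤ (p i).2)

/-- The dual objective value `Σ_{i ∈ V∖S} c(i)·y_i` (the value of `h_{d,M}` at a
potential). -/
noncomputable def hVal (n k : ℕ) (c : Fin n → ℕ) (p : Fin n → TStar k × ℝ) : ℝ :=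
  ∑ i ∈ univ.filter (fun i : Fin n => k ≤ i.val), (c i : ℝ) * (p i).2

/-! ### Auxiliary lemmas for clamping -/

theorem not_int_of_half {r : ℝ} (h : IsHalfIntegralOdd r) : ¬ IsIntegralReal r := by
  rcases h with ⟨z, rfl⟩
  rintro ⟨w, hw⟩
  have h2 : ((2 * z + 1 : ℤ) : ℝ) = ((2 * w : ℤ) : ℝ) := by push_cast; linarith
  have := Int.cast_injective (α := ℝ) h2
  omega

theorem isIntegral_min {a b : ℝ} (ha : IsIntegralReal a) (hb : IsIntegralReal b) :
    IsIntegralReal (min a b) := by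
  rcases ha with ⟨z, rfl⟩; rcases hb with ⟨w, rfl⟩
  exact ⟨min z w, by rw [Int.cast_min]⟩

theorem isHalf_min {a b : ℝ} (ha : IsHalfIntegralOdd a) (hb : IsHalfIntegralOdd b) :
    IsHalfIntegralOdd (min a b) := by
  rcases ha with ⟨z, rfl⟩; rcases hb with ⟨w, rfl⟩
  exact ⟨min z w, by rw [Int.cast_min, min_add_add_right]⟩

theorem isIntegralReal_natCast (m : ℕ) : IsIntegralReal (m : ℝ) := ⟨m, by push_cast; ring⟩

theorem isHalf_natCast_sub (m : ℕ) : IsHalfIntegralOdd ((m : ℝ) - 1 / 2) :=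
  ⟨(m : ℤ) - 1, by push_cast; ring⟩

theorem half_le_abs_sub {r r' : ℝ} (h : IsIntegralReal r) (h' : IsHalfIntegralOdd r') :
    1 / 2 ≤ |r - r'| := by
  rcases h with ⟨z, rfl⟩; rcases h' with ⟨w, rfl⟩
  have : (z : ℝ) - ((w : ℝ) + 1 / 2) = ((z - w : ℤ) : ℝ) - 1 / 2 := by push_cast; ring
  rw [this]
  rcases le_or_gt (z - w) 0 with hm | hm
  · have : ((z - w : ℤ) : ℝ) ≤ 0 := by exact_mod_cast hm
    rw [abs_of_nonpos (by linarith)]; linarith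
  · have : (1 : ℝ) ≤ ((z - w : ℤ) : ℝ) := by exact_mod_cast hm
    rw [abs_of_nonneg (by linarith)]; linarith

open Classical in
/-- The radius cap: `M` for integral radii, `M - 1/2` for half-integral ones. -/
noncomputable def radCap (M : ℕ) (r : ℝ) : ℝ :=
  if IsIntegralReal r then (M : ℝ) else (M : ℝ) - 1 / 2

open Classical in
/-- The `y` cap: `2M` for integral values, `2M - 1/2` for half-integral ones. -/
noncomputable def yCapF (M : ℕ) (y : ℝ) : ℝ :=
  if IsIntegralReal y then 2 * (M : ℝ) else 2 * (M : ℝ) - 1 / 2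

theorem radCap_nonneg {M : ℕ} (hM : 1 ≤ M) (r : ℝ) : 0 ≤ radCap M r := by
  have : (1 : ℝ) ≤ (M : ℝ) := by exact_mod_cast hM
  unfold radCap; split <;> linarith

theorem radCap_le (M : ℕ) (r : ℝ) : radCap M r ≤ (M : ℝ) := by
  unfold radCap; split <;> linarith

theorem yCapF_le (M : ℕ) (y : ℝ) : yCapF M y ≤ 2 * (M : ℝ) := by
  unfold yCapF; split <;> linarith

theorem yCapF_ge (M : ℕ) (y : ℝ) : 2 * (M : ℝ) - 1 / 2 ≤ yCapF M y := by
  unfold yCapF; split <;> linarith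

theorem yCapF_nonneg {M : ℕ} (hM : 1 ≤ M) (y : ℝ) : 0 ≤ yCapF M y := by
  have : (1 : ℝ) ≤ (M : ℝ) := by exact_mod_cast hM
  have := yCapF_ge M y; linarith

/-- The radial clamp of the star at level `M` (parity-corrected). -/
noncomputable def clampStar (k M : ℕ) (hM : 1 ≤ M) : TStar k → TStar k :=
  Quotient.lift (fun p : StarRep k =>
    Quotient.mk (starSetoid k)
      (⟨min p.1.1 (radCap M p.1.1), le_min p.1.2 (radCap_nonneg hM _)⟩, p.2))
    (by
      rintro p q (rfl | ⟨h1, h2⟩)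
      · rfl
      · apply Quotient.sound; right
        constructor
        · simp only [h1]; exact min_eq_left (radCap_nonneg hM _)
        · simp only [h2]; exact min_eq_left (radCap_nonneg hM _))

theorem starRad_clampStar (k M : ℕ) (hM : 1 ≤ M) (x : TStar k) :
    starRad k (clampStar k M hM x) = min (starRad k x) (radCap M (starRad k x)) := by
  induction x using Quotient.inductionOn with
  | h p => rfl

theorem starDist_le_rad_add (k : ℕ) (x y : TStar k) :
    starDist k x y ≤ starRad k x + starRad k y := by
  induction x, y using Quotient.inductionOn₂ with
  | h p q =>
    show starDistFun k p q ≤ p.1.1 + q.1.1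
    unfold starDistFun
    split
    · rw [abs_sub_le_iff]
      constructor <;> [linarith [q.1.2]; linarith [p.1.2]]
    · exact le_rfl

theorem clamp_min_abs_le {M : ℕ} (hM : 1 ≤ M) {r r' : ℝ}
    (h : IsIntegralReal r ∨ IsHalfIntegralOdd r)
    (h' : IsIntegralReal r' ∨ IsHalfIntegralOdd r') :
    |min r (radCap M r) - min r' (radCap M r')| ≤ |r - r'| := by
  refine le_trans (abs_min_sub_min_le_max _ _ _ _) (max_le le_rfl ?_)
  rcases h with h | h <;> rcases h' with h' | h'
  · rw [radCap, if_pos h, radCap, if_pos h']; simp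
  · rw [radCap, if_pos h, radCap, if_neg (not_int_of_half h')]
    have h12 : |(M : ℝ) - ((M : ℝ) - 1 / 2)| = 1 / 2 := by rw [abs_of_nonneg] <;> ring_nf <;> norm_num
    rw [h12]; exact half_le_abs_sub h h'
  · rw [radCap, if_neg (not_int_of_half h), radCap, if_pos h']
    have h12 : |((M : ℝ) - 1 / 2) - (M : ℝ)| = 1 / 2 := by rw [abs_of_nonpos] <;> ring_nf <;> norm_num
    rw [h12, abs_sub_comm]; exact half_le_abs_sub h' h
  · rw [radCap, if_neg (not_int_of_half h), radCap, if_neg (not_int_of_half h')]; simp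

theorem clampStar_dist_le (k M : ℕ) (hM : 1 ≤ M) (x y : TStar k)
    (hx : IsIntegralReal (starRad k x) ∨ IsHalfIntegralOdd (starRad k x))
    (hy : IsIntegralReal (starRad k y) ∨ IsHalfIntegralOdd (starRad k y)) :
    starDist k (clampStar k M hM x) (clampStar k M hM y) ≤ starDist k x y := by
  induction x, y using Quotient.inductionOn₂ with
  | h p q =>
    have hx' : IsIntegralReal p.1.1 ∨ IsHalfIntegralOdd p.1.1 := hx
    have hy' : IsIntegralReal q.1.1 ∨ IsHalfIntegralOdd q.1.1 := hy
    show starDistFun k (⟨min p.1.1 (radCap M p.1.1), _⟩, p.2)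
        (⟨min q.1.1 (radCap M q.1.1), _⟩, q.2) ≤ starDistFun k p q
    unfold starDistFun
    by_cases hbr : p.2 = q.2
    · rw [if_pos hbr, if_pos hbr]
      exact clamp_min_abs_le hM hx' hy'
    · rw [if_neg hbr, if_neg hbr]
      exact add_le_add (min_le_left _ _) (min_le_left _ _)

theorem clampStar_starPt (k M : ℕ) (hM : 1 ≤ M) (h : (0 : ℝ) ≤ (M : ℝ)) (s : Fin k) :
    clampStar k M hM (starPt k (M : ℝ) h s) = starPt k (M : ℝ) h s := by
  apply Quotient.sound
  left
  refine Prod.ext (Subtype.ext ?_) rfl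
  show min (M : ℝ) (radCap M (M : ℝ)) = (M : ℝ)
  rw [radCap, if_pos (isIntegralReal_natCast M), min_self]

/-- **Range of an optimal potential.** If `h_{d,M}` attains its minimum, then there is
an optimal potential `(x,y)` with `dist(0, x_i) ≤ M` and `y_i ≤ 2M` for every
nonterminal node `i`. -/
theorem exists_optimal_potential_in_range
    (n k : ℕ) (hk : 3 ≤ k) (hkn : k ≤ n)
    (G : SimpleGraph (Fin n)) (c : Fin n → ℕ) (d : Sym2 (Fin n) → ℕ)
    (hTT : ∀ i j : Fin n, G.Adj i j → ¬(i.val < k ∧ j.val < k))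
    (hd : ∀ e ∈ G.edgeSet, 1 ≤ d e)
    (M : ℕ) (hM : 1 ≤ M)
    (hattain : ∃ p : Fin n → TStar k × ℝ, IsPotential n k G d M p ∧
      ∀ q : Fin n → TStar k × ℝ, IsPotential n k G d M q →
        hVal n k c p ≤ hVal n k c q) :
    ∃ p : Fin n → TStar k × ℝ, IsPotential n k G d M p ∧
      (∀ q : Fin n → TStar k × ℝ, IsPotential n k G d M q →
        hVal n k c p ≤ hVal n k c q) ∧
      ∀ i : Fin n, k ≤ i.val → starRad k (p i).1 ≤ (M : ℝ) ∧ (p i).2 ≤ 2 * (M : ℝ) := by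
  obtain ⟨p, hp, hopt⟩ := hattain
  set q : Fin n → TStar k × ℝ :=
    fun i => (clampStar k M hM (p i).1, min (p i).2 (yCapF M (p i).2)) with hq
  have hgrid : ∀ i, p i ∈ StarGrid k := hp.1
  have hynn : ∀ i, 0 ≤ (p i).2 := hp.2.2.2
  have hrad : ∀ i, IsIntegralReal (starRad k (p i).1) ∨ IsHalfIntegralOdd (starRad k (p i).1) :=
    fun i => (hgrid i).elim (fun h => Or.inl h.1) (fun h => Or.inr h.1)
  have hqpot : IsPotential n k G d M q := by
    refine ⟨?_, ?_, ?_, ?_⟩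
    · -- grid
      intro i
      have := hgrid i
      rcases this with ⟨hr, hy⟩ | ⟨hr, hy⟩
      · left
        constructor
        · rw [show (q i).1 = clampStar k M hM (p i).1 from rfl, starRad_clampStar]
          exact isIntegral_min hr (by rw [radCap, if_pos hr]; exact isIntegralReal_natCast M)
        · show IsIntegralReal (min (p i).2 (yCapF M (p i).2))
          exact isIntegral_min hy
            (by rw [yCapF, if_pos hy]; exact ⟨2 * M, by push_cast; ring⟩)
      · right
        constructor
        · rw [show (q i).1 = clampStar k M hM (p i).1 from rfl, starRad_clampStar]
          refine isHalf_min hr ?_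
          rw [radCap, if_neg (not_int_of_half hr)]
          exact isHalf_natCast_sub M
        · show IsHalfIntegralOdd (min (p i).2 (yCapF M (p i).2))
          refine isHalf_min hy ?_
          rw [yCapF, if_neg (not_int_of_half hy)]
          exact ⟨2 * (M : ℤ) - 1, by push_cast; ring⟩
    · -- edge constraints
      intro i j hij
      have hd1 : (1 : ℝ) ≤ (d s(i, j) : ℝ) := by
        exact_mod_cast hd s(i, j) (G.mem_edgeSet.mpr hij)
      have hM1 : (1 : ℝ) ≤ (M : ℝ) := by exact_mod_cast hM
      by_cases hyi : (p i).2 ≤ yCapF M (p i).2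
      · by_cases hyj : (p j).2 ≤ yCapF M (p j).2
        · -- no y clamped
          have h1 : (q i).2 = (p i).2 := min_eq_left hyi
          have h2 : (q j).2 = (p j).2 := min_eq_left hyj
          have hdist : starDist k (q i).1 (q j).1 ≤ starDist k (p i).1 (p j).1 :=
            clampStar_dist_le k M hM _ _ (hrad i) (hrad j)
          have := hp.2.1 i j hij
          rw [h1, h2]; linarith
        · -- y_j clamped
          have h2 : (q j).2 = yCapF M (p j).2 := min_eq_right (le_of_not_ge hyj)
          have hdq : starDist k (q i).1 (q j).1 ≤ 2 * (M : ℝ) := by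
            refine le_trans (starDist_le_rad_add k _ _) ?_
            have hi : starRad k (q i).1 ≤ (M : ℝ) := by
              rw [show (q i).1 = clampStar k M hM (p i).1 from rfl, starRad_clampStar]
              exact le_trans (min_le_right _ _) (radCap_le M _)
            have hj : starRad k (q j).1 ≤ (M : ℝ) := by
              rw [show (q j).1 = clampStar k M hM (p j).1 from rfl, starRad_clampStar]
              exact le_trans (min_le_right _ _) (radCap_le M _)
            linarith
          have hq2 : 2 * (M : ℝ) - 1 / 2 ≤ (q j).2 := h2 ▸ yCapF_ge M _
          have hqi : 0 ≤ (q i).2 := le_min (hynn i) (yCapF_nonneg hM _)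
          linarith
      · -- y_i clamped
        have h1 : (q i).2 = yCapF M (p i).2 := min_eq_right (le_of_not_ge hyi)
        have hdq : starDist k (q i).1 (q j).1 ≤ 2 * (M : ℝ) := by
          refine le_trans (starDist_le_rad_add k _ _) ?_
          have hi : starRad k (q i).1 ≤ (M : ℝ) := by
            rw [show (q i).1 = clampStar k M hM (p i).1 from rfl, starRad_clampStar]
            exact le_trans (min_le_right _ _) (radCap_le M _)
          have hj : starRad k (q j).1 ≤ (M : ℝ) := by
            rw [show (q j).1 = clampStar k M hM (p j).1 from rfl, starRad_clampStar]
            exact le_trans (min_le_right _ _) (radCap_le M _)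
          linarith
        have hq1 : 2 * (M : ℝ) - 1 / 2 ≤ (q i).2 := h1 ▸ yCapF_ge M _
        have hqj : 0 ≤ (q j).2 := le_min (hynn j) (yCapF_nonneg hM _)
        linarith
    · -- terminals
      intro i hik
      have hpi := hp.2.2.1 i hik
      have h1 : (q i).1 = starPt k (M : ℝ) (Nat.cast_nonneg M) ⟨i.val, hik⟩ := by
        show clampStar k M hM (p i).1 = _
        rw [hpi]
        exact clampStar_starPt k M hM _ _
      have h2 : (q i).2 = 0 := by
        show min (p i).2 (yCapF M (p i).2) = 0
        rw [hpi]
        exact min_eq_left (yCapF_nonneg hM _)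
      exact Prod.ext h1 h2
    · -- nonnegativity
      intro i
      exact le_min (hynn i) (yCapF_nonneg hM _)
  have hqle : hVal n k c q ≤ hVal n k c p := by
    refine Finset.sum_le_sum fun i _ => ?_
    exact mul_le_mul_of_nonneg_left (min_le_left _ _) (Nat.cast_nonneg _)
  refine ⟨q, hqpot, fun r hr => le_trans hqle (hopt r hr), fun i _ => ?_⟩
  constructor
  · rw [show (q i).1 = clampStar k M hM (p i).1 from rfl, starRad_clampStar]
    exact le_trans (min_le_right _ _) (radCap_le M _)
  · exact le_trans (min_le_right _ _) (yCapF_le M _)
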